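/- Let A > 0, B ∈ ℝ and R > 0 with 0 < R < π/(2√(4B² + A²)). Then for every real k with k ≤ −π/(4R), the real part of a₁(k) = 1 + A² e^{4ikR}/(4(k² − B²)) is strictly positive; that is, 1 + A² cos(4kR)/(4(k² − B²)) > 0 for all real k ≤ −π/(4R). (In particular k² > B² for such k, so a₁(k) is well defined.) -/
import Mathlib


/-- For `0 < R < π/(2√(4B² + A²))`, the real part of `a₁(k) = 1 + A²e^{4ikR}/(4(k² − B²))` is
strictly positive for all real `k ≤ −π/(4R)`; in particular `k² > B²` for such `k`. -/
theorem re_a1_pos (A B R : ℝ) (hA : 0 < A) (hR : 0 < R)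
    (hRlt : R < Real.pi / (2 * Real.sqrt (4 * B ^ 2 + A ^ 2))) :
    ∀ k : ℝ, k ≤ -Real.pi / (4 * R) →
      B ^ 2 < k ^ 2 ∧ 0 < 1 + A ^ 2 * Real.cos (4 * k * R) / (4 * (k ^ 2 - B ^ 2)) := by
  intro k hk
  set S := Real.sqrt (4 * B ^ 2 + A ^ 2) with hSdef
  have hSpos : 0 < S := Real.sqrt_pos.2 (by positivity)
  have hSsq : S ^ 2 = 4 * B ^ 2 + A ^ 2 := Real.sq_sqrt (by positivity)
  have h1 : 2 * S * R < Real.pi := by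
    rw [lt_div_iff₀ (by positivity)] at hRlt
    nlinarith
  -- -k ≥ π/(4R) > S/2
  have hk1 : Real.pi / (4 * R) ≤ -k := by rw [neg_div] at hk; linarith
  have hk2 : S / 2 < -k := by
    have : S / 2 < Real.pi / (4 * R) := by
      rw [lt_div_iff₀ (by positivity)]
      nlinarith
    linarith
  have hk3 : (4 * B ^ 2 + A ^ 2) / 4 < k ^ 2 := by
    have h := mul_self_lt_mul_self (by positivity : (0:ℝ) ≤ S / 2) hk2
    nlinarith
  have hB : B ^ 2 < k ^ 2 := by nlinarith
  refine ⟨hB, ?_⟩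
  have hD : A ^ 2 < 4 * (k ^ 2 - B ^ 2) := by nlinarith
  have hDpos : 0 < 4 * (k ^ 2 - B ^ 2) := by nlinarith
  have hcos : -1 ≤ Real.cos (4 * k * R) := Real.neg_one_le_cos _
  have hnum : -(A ^ 2) ≤ A ^ 2 * Real.cos (4 * k * R) := by nlinarith
  have : -(A ^ 2) / (4 * (k ^ 2 - B ^ 2)) ≤ A ^ 2 * Real.cos (4 * k * R) / (4 * (k ^ 2 - B ^ 2)) :=
    div_le_div_of_nonneg_right hnum hDpos.le |>.trans_eq rfl
  have hlast : -1 < -(A ^ 2) / (4 * (k ^ 2 - B ^ 2)) := by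
    rw [neg_div, neg_lt_neg_iff, div_lt_one hDpos]
    exact hD
  linarith
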